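/- Let G be a simple graph on n vertices with a designated Hamiltonian cycle C, let S be a set of independent chords of G, and let t ≥ 1. If Q_S contains a chain of size t, then some chord in this chain has an exterior containing at most n/t vertices; consequently, G contains a nontrivial cycle of length at least n − n/t. -/

import Mathlib

/-!  We formalize "a graph `G` on `n` vertices with a designated Hamiltonian cycle `C`
(with a fixed cyclic orientation)" by taking the vertex set to be `ZMod n` (with `3 ≤ n`)
and the designated Hamiltonian cycle to be `0, 1, 2, ..., n-1, 0`, which is a Hamiltonian
cycle of `G` thanks to the hypothesis `∀ i : ZMod n, G.Adj i (i + 1)`.  -/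

/-- The length of the path from `x` to `y` along the designated Hamiltonian cycle,
following the fixed orientation; this is `d_C(x, y)`. -/
def dC {n : ℕ} (x y : ZMod n) : ℕ := (y - x).val

/-- `CBtw x y z` formalizes `x ≺ y ≺ z`: traversing the cycle starting from `x`
(in the fixed orientation), one meets `y` (strictly after `x`) and then `z`. -/
def CBtw {n : ℕ} (x y z : ZMod n) : Prop := 0 < dC x y ∧ dC x y < dC x z

/-- The set of vertices on the path from `a` to `b` along the cycle (following the
orientation), inclusive of both endpoints.  The two *domains* of a chord `{a, b}` are
`arc a b` and `arc b a`. -/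
def arc {n : ℕ} (a b : ZMod n) : Set (ZMod n) := {v | dC a v ≤ dC a b}

/-- The edge set of the designated Hamiltonian cycle. -/
def stdEdges (n : ℕ) : Set (Sym2 (ZMod n)) := {e | ∃ i : ZMod n, e = s(i, i + 1)}

/-- `{a, b}` is a chord of `G`: an edge of `G` not belonging to the designated
Hamiltonian cycle. -/
def IsChordPair {n : ℕ} (G : SimpleGraph (ZMod n)) (a b : ZMod n) : Prop :=
  G.Adj a b ∧ s(a, b) ∉ stdEdges n

/-- The chords `{a, b}` and `{x, y}` interlace: their endpoints are distinct and appear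
in alternating order around the cycle. -/
def Interlace {n : ℕ} (a b x y : ZMod n) : Prop :=
  (CBtw a x b ∧ CBtw b y a) ∨ (CBtw a y b ∧ CBtw b x a)

/-- `G` contains a cycle, distinct from the designated Hamiltonian cycle
(i.e. a *nontrivial* cycle), of length at least `L`. -/
def HasNontrivialCycleOfLength {n : ℕ} (G : SimpleGraph (ZMod n)) (L : ℝ) : Prop :=
  ∃ (w : ZMod n) (W : G.Walk w w), W.IsCycle ∧
    {e | e ∈ W.edges} ≠ stdEdges n ∧ L ≤ (W.length : ℝ)

/-- `S` is a set of independent chords of `G`: every element is a chord, and no two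
distinct chords in `S` share an endpoint.  (Chords are recorded as ordered pairs of
endpoints.) -/
def IndepChords {n : ℕ} (G : SimpleGraph (ZMod n)) (S : Finset (ZMod n × ZMod n)) : Prop :=
  (∀ e ∈ S, IsChordPair G e.1 e.2) ∧
  (∀ e ∈ S, ∀ e' ∈ S, e ≠ e' →
    e.1 ≠ e'.1 ∧ e.1 ≠ e'.2 ∧ e.2 ≠ e'.1 ∧ e.2 ≠ e'.2)

/-- The *interior* of the chord `{a, b}` with respect to the fixed cycle edge
`f = {f0, f0 + 1}`: the domain of the chord containing both endpoints of `f`. -/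
def interiorD {n : ℕ} (f0 a b : ZMod n) : Set (ZMod n) :=
  if dC a f0 ≤ dC a b ∧ dC a (f0 + 1) ≤ dC a b then arc a b else arc b a

/-- The *exterior* of the chord `{a, b}` with respect to the fixed cycle edge
`f = {f0, f0 + 1}`: the domain of the chord other than its interior. -/
def exteriorD {n : ℕ} (f0 a b : ZMod n) : Set (ZMod n) :=
  if dC a f0 ≤ dC a b ∧ dC a (f0 + 1) ≤ dC a b then arc b a else arc a b

/-- The position of `v` in the linear order `L` on the vertices obtained by starting at
the endpoint `f0 + 1` of the fixed cycle edge `f = {f0, f0 + 1}` and following the cycle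
to its other endpoint `f0`. -/
def posL {n : ℕ} (f0 v : ZMod n) : ℕ := dC (f0 + 1) v

/-- The strict order of the poset `P_S`:  `e1 < e2` iff the interior of `e1` is
(strictly) contained in the interior of `e2`. -/
def PRel {n : ℕ} (f0 : ZMod n) (e1 e2 : ZMod n × ZMod n) : Prop :=
  interiorD f0 e1.1 e1.2 ⊂ interiorD f0 e2.1 e2.2

/-- The strict order of the poset `Q_S`:  `e1 < e2` iff both endpoints of `e1` precede
both endpoints of `e2` in the linear order `L`. -/
def QRel {n : ℕ} (f0 : ZMod n) (e1 e2 : ZMod n × ZMod n) : Prop :=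
  posL f0 e1.1 < posL f0 e2.1 ∧ posL f0 e1.1 < posL f0 e2.2 ∧
  posL f0 e1.2 < posL f0 e2.1 ∧ posL f0 e1.2 < posL f0 e2.2

/-- `A` is a chain in the poset `P_S`. -/
def IsChainP {n : ℕ} (f0 : ZMod n) (A : Finset (ZMod n × ZMod n)) : Prop :=
  ∀ e ∈ A, ∀ e' ∈ A, e ≠ e' → PRel f0 e e' ∨ PRel f0 e' e

/-- `A` is a chain in the poset `Q_S`. -/
def IsChainQ {n : ℕ} (f0 : ZMod n) (A : Finset (ZMod n × ZMod n)) : Prop :=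
  ∀ e ∈ A, ∀ e' ∈ A, e ≠ e' → QRel f0 e e' ∨ QRel f0 e' e

/-- `A` is an antichain in the poset `P_S`. -/
def IsAntichainP {n : ℕ} (f0 : ZMod n) (A : Finset (ZMod n × ZMod n)) : Prop :=
  ∀ e ∈ A, ∀ e' ∈ A, e ≠ e' → ¬ PRel f0 e e' ∧ ¬ PRel f0 e' e

/-- `A` is an antichain in the poset `Q_S`. -/
def IsAntichainQ {n : ℕ} (f0 : ZMod n) (A : Finset (ZMod n × ZMod n)) : Prop :=
  ∀ e ∈ A, ∀ e' ∈ A, e ≠ e' → ¬ QRel f0 e e' ∧ ¬ QRel f0 e' e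

set_option linter.unusedSectionVars false
section Helpers
variable {n : ℕ} [NeZero n]

lemma natCast_val_self (a : ZMod n) : ((a.val : ℕ) : ZMod n) = a := by
  simp [ZMod.natCast_val, ZMod.cast_id]

lemma posL_lt (f0 v : ZMod n) : posL f0 v < n := ZMod.val_lt _
lemma dC_lt (x y : ZMod n) : dC x y < n := ZMod.val_lt _

lemma dC_posL (f0 a v : ZMod n) : dC a v = (posL f0 v + (n - posL f0 a)) % n := by
  have h1 : ((posL f0 v + (n - posL f0 a) : ℕ) : ZMod n) = v - a := by
    have hle : posL f0 a ≤ n := (posL_lt f0 a).le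
    push_cast [Nat.cast_sub hle]
    simp only [posL, dC, natCast_val_self, ZMod.natCast_self]
    ring
  rw [dC, ← h1, ZMod.val_natCast]

lemma dC_posL_le (f0 : ZMod n) {a v : ZMod n} (h : posL f0 a ≤ posL f0 v) :
    dC a v = posL f0 v - posL f0 a := by
  have h1 := posL_lt f0 a
  have h2 := posL_lt f0 v
  rw [dC_posL f0]
  have : posL f0 v + (n - posL f0 a) = (posL f0 v - posL f0 a) + n := by omega
  rw [this, Nat.add_mod_right, Nat.mod_eq_of_lt (by omega)]

lemma dC_posL_gt (f0 : ZMod n) {a v : ZMod n} (h : posL f0 v < posL f0 a) :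
    dC a v = posL f0 v + n - posL f0 a := by
  have h1 := posL_lt f0 a
  have h2 := posL_lt f0 v
  rw [dC_posL f0]
  have : posL f0 v + (n - posL f0 a) = posL f0 v + n - posL f0 a := by omega
  rw [this, Nat.mod_eq_of_lt (by omega)]

lemma posL_inj {f0 u v : ZMod n} (h : posL f0 u = posL f0 v) : u = v := by
  have := congrArg (fun k : ℕ => (k : ZMod n)) h
  simp only [posL, dC, natCast_val_self] at this
  exact sub_left_injective this

lemma posL_f0 (hn : 2 ≤ n) (f0 : ZMod n) : posL f0 f0 = n - 1 := by
  have : f0 - (f0 + 1) = ((n - 1 : ℕ) : ZMod n) := by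
    push_cast [Nat.cast_sub (by omega : 1 ≤ n)]
    simp [ZMod.natCast_self]
  simp only [posL, dC, this, ZMod.val_natCast]
  exact Nat.mod_eq_of_lt (by omega)

lemma posL_f1 (f0 : ZMod n) : posL f0 (f0 + 1) = 0 := by
  simp [posL, dC]


lemma exterior_spec (hn : 3 ≤ n) (f0 a b : ZMod n) (hne : a ≠ b)
    (hns : s(a, b) ∉ stdEdges n) :
    ∃ x y : ZMod n, s(x, y) = s(a, b) ∧ posL f0 x < posL f0 y ∧
      exteriorD f0 a b = arc x y ∧
      ∀ v ∈ arc x y, posL f0 x ≤ posL f0 v ∧ posL f0 v ≤ posL f0 y := by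
  have hN : NeZero n := ⟨by omega⟩
  set p := posL f0 a with hp
  set q := posL f0 b with hq
  have hpq : p ≠ q := fun h => hne (posL_inj h)
  have hpn := posL_lt f0 a
  have hqn := posL_lt f0 b
  have hf0 : posL f0 f0 = n - 1 := posL_f0 (by omega) f0
  have hf1 : posL f0 (f0 + 1) = 0 := posL_f1 f0
  rcases lt_or_gt_of_ne hpq with hlt | hgt
  · -- p < q : exterior = arc a b
    have hab : dC a b = q - p := dC_posL_le f0 hlt.le
    have hcond : ¬ (dC a f0 ≤ dC a b ∧ dC a (f0 + 1) ≤ dC a b) := by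
      rintro ⟨h1, h2⟩
      have haf0 : dC a f0 = n - 1 - p := by
        rcases Nat.eq_or_lt_of_le (Nat.le_of_lt_succ (by omega : p < n - 1 + 1)) with h | h
        · rw [dC_posL_le f0 (by omega), hf0]
        · rw [dC_posL_le f0 (by omega), hf0]
      have hq' : q = n - 1 := by omega
      have hp' : p = 0 := by
        by_contra hp0
        have : dC a (f0 + 1) = 0 + n - p := by
          rw [dC_posL_gt f0 (by omega), hf1]
        omega
      have ha : a = f0 + 1 := posL_inj (by rw [← hp, hp', hf1])
      have hb : b = f0 := posL_inj (by rw [← hq, hq', hf0])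
      exact hns ⟨f0, by rw [ha, hb, Sym2.eq_swap]⟩
    refine ⟨a, b, rfl, hlt, by simp [exteriorD, hcond], ?_⟩
    intro v hv
    have hvn := posL_lt f0 v
    simp only [arc, Set.mem_setOf_eq, hab] at hv
    rcases le_or_gt p (posL f0 v) with h | h
    · rw [dC_posL_le f0 h] at hv; omega
    · rw [dC_posL_gt f0 h] at hv; omega
  · -- q < p : exterior = arc b a
    have hab : dC a b = q + n - p := dC_posL_gt f0 hgt
    have hcond : dC a f0 ≤ dC a b ∧ dC a (f0 + 1) ≤ dC a b := by
      constructor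
      · rcases Nat.eq_or_lt_of_le (Nat.le_of_lt_succ (by omega : p < n - 1 + 1)) with h | h
        · rw [dC_posL_le f0 (by omega), hf0]; omega
        · rw [dC_posL_le f0 (by omega), hf0]; omega
      · rw [dC_posL_gt f0 (by omega), hf1]; omega
    have hba : dC b a = p - q := dC_posL_le f0 hgt.le
    refine ⟨b, a, Sym2.eq_swap, hgt, by simp [exteriorD, hcond], ?_⟩
    intro v hv
    have hvn := posL_lt f0 v
    simp only [arc, Set.mem_setOf_eq, hba] at hv
    rcases le_or_gt q (posL f0 v) with h | h
    · rw [dC_posL_le f0 h] at hv; omega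
    · rw [dC_posL_gt f0 h] at hv; omega

lemma val_cast_lt {k : ℕ} (hk : k < n) : ((k : ZMod n) : ZMod n).val = k := by
  exact ZMod.val_cast_of_lt hk

lemma arc_ncard_ge (x y : ZMod n) : dC x y + 1 ≤ (arc x y).ncard := by
  classical
  set d := dC x y with hd
  have hdn : d < n := dC_lt x y
  have hsub : ↑((Finset.range (d + 1)).image (fun i : ℕ => x + (i : ZMod n))) ⊆ arc x y := by
    intro v hv
    simp only [Finset.coe_image, Set.mem_image, Finset.mem_coe, Finset.mem_range] at hv
    obtain ⟨i, hi, rfl⟩ := hv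
    simp only [arc, Set.mem_setOf_eq, dC, add_sub_cancel_left]
    rw [ZMod.val_cast_of_lt (by omega)]
    exact Nat.lt_succ_iff.mp hi
  have hcard : ((Finset.range (d + 1)).image (fun i : ℕ => x + (i : ZMod n))).card = d + 1 := by
    rw [Finset.card_image_of_injOn, Finset.card_range]
    intro i hi j hj hij
    simp only [Finset.mem_coe, Finset.mem_range] at hi hj
    have : (i : ZMod n) = (j : ZMod n) := by
      exact add_left_cancel hij
    have := congrArg ZMod.val this
    rwa [ZMod.val_cast_of_lt (by omega), ZMod.val_cast_of_lt (by omega)] at this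
  calc d + 1 = _ := hcard.symm
    _ = (↑((Finset.range (d + 1)).image (fun i : ℕ => x + (i : ZMod n))) : Set (ZMod n)).ncard := (Set.ncard_coe_finset _).symm
    _ ≤ (arc x y).ncard := Set.ncard_le_ncard hsub (Set.toFinite _)

lemma arc_ncard_le (f0 : ZMod n) {x y : ZMod n}
    (h : ∀ v ∈ arc x y, posL f0 x ≤ posL f0 v ∧ posL f0 v ≤ posL f0 y) :
    (arc x y).ncard ≤ (Finset.Icc (posL f0 x) (posL f0 y)).card := by
  classical
  have hsub : arc x y ⊆ ↑((Finset.Icc (posL f0 x) (posL f0 y)).image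
      (fun i : ℕ => (f0 + 1) + (i : ZMod n))) := by
    intro v hv
    simp only [Finset.coe_image, Set.mem_image, Finset.mem_coe, Finset.mem_Icc]
    refine ⟨posL f0 v, h v hv, ?_⟩
    simp only [posL, dC, natCast_val_self]
    ring
  calc (arc x y).ncard ≤ _ := Set.ncard_le_ncard hsub (Set.toFinite _)
    _ = ((Finset.Icc (posL f0 x) (posL f0 y)).image (fun i : ℕ => (f0 + 1) + (i : ZMod n))).card := Set.ncard_coe_finset _
    _ ≤ (Finset.Icc (posL f0 x) (posL f0 y)).card := Finset.card_image_le

def cw {n : ℕ} (G : SimpleGraph (ZMod n)) (hC : ∀ i : ZMod n, G.Adj i (i + 1)) :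
    (k : ℕ) → (v : ZMod n) → G.Walk v (v + (k : ℕ))
  | 0, v => SimpleGraph.Walk.nil.copy rfl (by simp)
  | (k + 1), v =>
      SimpleGraph.Walk.cons (hC v) ((cw G hC k (v + 1)).copy rfl (by push_cast; ring))

variable {G : SimpleGraph (ZMod n)} {hC : ∀ i : ZMod n, G.Adj i (i + 1)}

lemma cw_length (k : ℕ) (v : ZMod n) : (cw G hC k v).length = k := by
  induction k generalizing v with
  | zero => simp [cw]
  | succ k ih => simp [cw, ih]

lemma cw_support (k : ℕ) (v : ZMod n) :
    (cw G hC k v).support = (List.range (k + 1)).map (fun i : ℕ => v + (i : ZMod n)) := by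
  induction k generalizing v with
  | zero => simp [cw, List.range_succ]
  | succ k ih =>
      rw [List.range_succ_eq_map]
      simp only [cw, SimpleGraph.Walk.support_cons, SimpleGraph.Walk.support_copy, ih,
        List.map_cons, List.map_map, Nat.cast_zero, add_zero]
      congr 1
      apply List.map_congr_left
      intro i _
      simp only [Function.comp_apply]
      push_cast
      ring

lemma cw_edges_std (k : ℕ) (v : ZMod n) : ∀ e ∈ (cw G hC k v).edges, e ∈ stdEdges n := by
  induction k generalizing v with
  | zero => simp [cw]
  | succ k ih =>
      intro e he
      simp only [cw, SimpleGraph.Walk.edges_cons, SimpleGraph.Walk.edges_copy,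
        List.mem_cons] at he
      rcases he with rfl | he
      · exact ⟨v, rfl⟩
      · exact ih (v + 1) e he

lemma chord_d_bounds (hn : 3 ≤ n) {x y : ZMod n} (hne : x ≠ y)
    (hns : s(x, y) ∉ stdEdges n) : 2 ≤ dC x y ∧ dC x y ≤ n - 2 := by
  have hdn : dC x y < n := dC_lt x y
  have h0 : dC x y ≠ 0 := by
    intro h
    exact hne (by simpa [sub_eq_zero, eq_comm] using (ZMod.val_eq_zero _).mp h)
  have h1 : dC x y ≠ 1 := by
    intro h
    have : y - x = (1 : ZMod n) := by
      have := natCast_val_self (y - x)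
      rw [show (y - x).val = 1 from h] at this
      simpa using this.symm
    have hy : y = x + 1 := by
      have := sub_eq_iff_eq_add'.mp this
      simpa using this
    exact hns ⟨x, by rw [hy]⟩
  have h2 : dC x y ≠ n - 1 := by
    intro h
    have hv : y - x = ((n - 1 : ℕ) : ZMod n) := by
      have := natCast_val_self (y - x)
      rw [show (y - x).val = n - 1 from h] at this
      exact this.symm
    have : y - x = -1 := by
      rw [hv, Nat.cast_sub (by omega : 1 ≤ n)]
      simp [ZMod.natCast_self]
    have hx : x = y + 1 := by
      have : x - y = 1 := by
        have := congrArg Neg.neg this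
        simpa [neg_sub] using this
      have := sub_eq_iff_eq_add'.mp this
      simpa using this
    exact hns ⟨y, by rw [hx, Sym2.eq_swap]⟩
  omega

lemma dC_add_dC {x y : ZMod n} (hne : x ≠ y) : dC x y + dC y x = n := by
  have h0 : y - x ≠ 0 := sub_ne_zero.mpr (Ne.symm hne)
  have : dC y x = (-(y - x)).val := by rw [dC, neg_sub]
  rw [this, ZMod.neg_val, if_neg h0, dC]
  have := ZMod.val_lt (y - x)
  have h0' : (y - x).val ≠ 0 := fun h => h0 ((ZMod.val_eq_zero _).mp h)
  omega

lemma chord_cycle (hn : 3 ≤ n) (hC : ∀ i : ZMod n, G.Adj i (i + 1)) {x y : ZMod n} (hadj : G.Adj x y)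
    (hns : s(x, y) ∉ stdEdges n) :
    ∃ (w : ZMod n) (W : G.Walk w w), W.IsCycle ∧
      {e | e ∈ W.edges} ≠ stdEdges n ∧ W.length = n - dC x y + 1 := by
  classical
  set d := dC x y with hd
  obtain ⟨hd2, hdn2⟩ := chord_d_bounds hn hadj.ne hns
  have hdx : dC y x = n - d := by have := dC_add_dC (n := n) hadj.ne; omega
  have hyx : y + ((n - d : ℕ) : ZMod n) = x := by
    have : ((n - d : ℕ) : ZMod n) = x - y := by
      rw [← hdx, dC, natCast_val_self]
    rw [this]; ring
  refine ⟨x, SimpleGraph.Walk.cons hadj ((cw G hC (n - d) y).copy rfl hyx), ?_, ?_, ?_⟩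
  · rw [SimpleGraph.Walk.cons_isCycle_iff]
    constructor
    · rw [SimpleGraph.Walk.isPath_def, SimpleGraph.Walk.support_copy, cw_support]
      refine List.Nodup.map_on ?_ List.nodup_range
      intro i hi j hj hij
      simp only [List.mem_range] at hi hj
      have : (i : ZMod n) = (j : ZMod n) := add_left_cancel hij
      have := congrArg ZMod.val this
      rwa [ZMod.val_cast_of_lt (by omega), ZMod.val_cast_of_lt (by omega)] at this
    · intro he
      rw [SimpleGraph.Walk.edges_copy] at he
      exact hns (cw_edges_std _ _ _ he)
  · intro h
    have : s(x, y) ∈ stdEdges n := by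
      rw [← h]
      simp
    exact hns this
  · simp [SimpleGraph.Walk.length_cons, cw_length]

end Helpers

/-- If `Q_S` contains a chain of size `t ≥ 1`, then some chord in this chain has an
exterior containing at most `n/t` vertices; consequently, `G` contains a nontrivial
cycle of length at least `n - n/t`. -/

theorem small_exterior_of_chain_in_Q
    (n : ℕ) (G : SimpleGraph (ZMod n)) (hn : 3 ≤ n)
    (hC : ∀ i : ZMod n, G.Adj i (i + 1)) (f0 : ZMod n)
    (S : Finset (ZMod n × ZMod n)) (hS : IndepChords G S)
    (t : ℕ) (ht : 1 ≤ t)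
    (A : Finset (ZMod n × ZMod n)) (hAS : A ⊆ S)
    (hcard : A.card = t) (hchain : IsChainQ f0 A) :
    (∃ e ∈ A, ((exteriorD f0 e.1 e.2).ncard : ℝ) ≤ (n : ℝ) / (t : ℝ)) ∧
    HasNontrivialCycleOfLength G ((n : ℝ) - (n : ℝ) / (t : ℝ)) := by
  classical
  haveI : NeZero n := ⟨by omega⟩
  set I : ZMod n × ZMod n → Finset ℕ :=
    fun e => Finset.Icc (min (posL f0 e.1) (posL f0 e.2)) (max (posL f0 e.1) (posL f0 e.2))
    with hI
  -- per-chord structural facts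
  have hspec : ∀ e ∈ A, ∃ x y : ZMod n, s(x, y) = s(e.1, e.2) ∧
      posL f0 x < posL f0 y ∧ exteriorD f0 e.1 e.2 = arc x y ∧
      (∀ v ∈ arc x y, posL f0 x ≤ posL f0 v ∧ posL f0 v ≤ posL f0 y) ∧
      I e = Finset.Icc (posL f0 x) (posL f0 y) := by
    intro e he
    obtain ⟨hadj, hns⟩ := hS.1 e (hAS he)
    obtain ⟨x, y, hsym, hxy, hext, hsub⟩ := exterior_spec hn f0 e.1 e.2 hadj.ne hns
    refine ⟨x, y, hsym, hxy, hext, hsub, ?_⟩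
    rcases Sym2.eq_iff.mp hsym with ⟨h1, h2⟩ | ⟨h1, h2⟩
    · rw [hI]
      simp only [← h1, ← h2]
      rw [min_eq_left hxy.le, max_eq_right hxy.le]
    · rw [hI]
      simp only [← h1, ← h2]
      rw [min_eq_right hxy.le, max_eq_left hxy.le]
  have hcardle : ∀ e ∈ A, (exteriorD f0 e.1 e.2).ncard ≤ (I e).card := by
    intro e he
    obtain ⟨x, y, hsym, hxy, hext, hsub, hIe⟩ := hspec e he
    rw [hext, hIe]
    exact arc_ncard_le f0 hsub
  -- disjointness
  have hdisj : ∀ e ∈ A, ∀ e' ∈ A, e ≠ e' → Disjoint (I e) (I e') := by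
    intro e he e' he' hnee
    have key : ∀ e₁ e₂ : ZMod n × ZMod n, QRel f0 e₁ e₂ → Disjoint (I e₁) (I e₂) := by
      intro e₁ e₂ ⟨h1, h2, h3, h4⟩
      rw [Finset.disjoint_left]
      intro i hi hi'
      simp only [hI, Finset.mem_Icc] at hi hi'
      omega
    rcases hchain e he e' he' hnee with h | h
    · exact key _ _ h
    · exact (key _ _ h).symm
  have hAne : A.Nonempty := Finset.card_pos.mp (by omega)
  -- total count
  have hsum : ∑ e ∈ A, (I e).card ≤ n := by
    rw [← Finset.card_biUnion hdisj]
    calc (A.biUnion I).card ≤ (Finset.range n).card := by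
          apply Finset.card_le_card
          intro i hi
          obtain ⟨e, he, hie⟩ := Finset.mem_biUnion.mp hi
          simp only [hI, Finset.mem_Icc] at hie
          have h1 := posL_lt f0 e.1
          have h2 := posL_lt f0 e.2
          simp only [Finset.mem_range]
          omega
      _ = n := Finset.card_range n
  have ht0 : (0 : ℝ) < (t : ℝ) := by exact_mod_cast ht
  -- a small chord exists
  have hexists : ∃ e ∈ A, ((I e).card : ℝ) ≤ (n : ℝ) / (t : ℝ) := by
    by_contra hcon
    push_neg at hcon
    have hlt : (n : ℝ) < ∑ e ∈ A, ((I e).card : ℝ) := by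
      calc (n : ℝ) = ∑ _e ∈ A, ((n : ℝ) / (t : ℝ)) := by
            rw [Finset.sum_const, hcard, nsmul_eq_mul]
            field_simp
        _ < _ := Finset.sum_lt_sum_of_nonempty hAne hcon
    have hle : ∑ e ∈ A, ((I e).card : ℝ) ≤ (n : ℝ) := by
      exact_mod_cast hsum
    linarith
  obtain ⟨e, he, hIe⟩ := hexists
  have hextle : ((exteriorD f0 e.1 e.2).ncard : ℝ) ≤ (n : ℝ) / (t : ℝ) := by
    refine le_trans ?_ hIe
    exact_mod_cast hcardle e he
  refine ⟨⟨e, he, hextle⟩, ?_⟩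
  -- the nontrivial long cycle
  obtain ⟨hadj, hns⟩ := hS.1 e (hAS he)
  obtain ⟨x, y, hsym, hxy, hext, hsub, hIe'⟩ := hspec e he
  have hadjxy : G.Adj x y := by
    rcases Sym2.eq_iff.mp hsym with ⟨h1, h2⟩ | ⟨h1, h2⟩
    · rw [h1, h2]; exact hadj
    · rw [h1, h2]; exact hadj.symm
  have hnsxy : s(x, y) ∉ stdEdges n := by rw [hsym]; exact hns
  obtain ⟨w, W, hcyc, hnt, hlen⟩ := chord_cycle hn hC hadjxy hnsxy
  refine ⟨w, W, hcyc, hnt, ?_⟩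
  have hd : (dC x y : ℝ) + 1 ≤ (n : ℝ) / (t : ℝ) := by
    have h1 := arc_ncard_ge x y
    have : ((dC x y + 1 : ℕ) : ℝ) ≤ ((exteriorD f0 e.1 e.2).ncard : ℝ) := by
      rw [hext]
      exact_mod_cast h1
    push_cast at this
    linarith
  have hdn : dC x y ≤ n := (dC_lt x y).le
  rw [hlen]
  push_cast [Nat.cast_sub hdn]
  linarith
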